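/- A second-order differential operator T = a(z)∂²_z + b(z)∂_z + c(z) with polynomial or Laurent-polynomial coefficients preserves the exceptional monomial module 𝒫⁽¹⁾ₙ = span{1, z², z³, …, zⁿ} (for fixed n ≥ 4) if and only if T is a real linear combination of the seven operators: z⁴∂²_z + 2(1-n)z³∂_z + n(n-1)z², z³∂²_z - (n-1)z²∂_z, z²∂²_z, z∂²_z - ∂_z, ∂²_z - 2z⁻¹∂_z, z∂_z, and 1. -/

import Mathlib

open Polynomial

/-- A function ℝ → ℝ is (away from 0) given by a Laurent polynomial. -/
def IsLaurentPoly (f : ℝ → ℝ) : Prop :=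
  ∃ (p : Polynomial ℝ) (k : ℕ), ∀ z : ℝ, z ≠ 0 → f z = p.eval z / z ^ k

/-- The exceptional monomial module 𝒫⁽¹⁾ₙ = span{1, z², z³, …, zⁿ} as a space of
functions ℝ → ℝ. -/
noncomputable def excFunModule (n : ℕ) : Submodule ℝ (ℝ → ℝ) :=
  Submodule.span ℝ ({fun _ => 1} ∪ {f | ∃ k : ℕ, 2 ≤ k ∧ k ≤ n ∧ f = fun z : ℝ => z ^ k})

open Polynomial


lemma monomial_mem (n : ℕ) (t : ℝ) (j : ℕ) (hj : j = 0 ∨ (2 ≤ j ∧ j ≤ n)) :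
    (fun z : ℝ => t * z ^ j) ∈ excFunModule n := by
  have hgen : (fun z : ℝ => z ^ j) ∈ excFunModule n := by
    apply Submodule.subset_span
    rcases hj with h | ⟨h1, h2⟩
    · left; subst h; funext z; simp
    · right; exact ⟨j, h1, h2, rfl⟩
  have he : t • (fun z : ℝ => z ^ j) = fun z : ℝ => t * z ^ j := by
    funext z; simp
  rw [← he]; exact Submodule.smul_mem _ t hgen

lemma zero_or_monomial_mem (n : ℕ) (t : ℝ) (j : ℕ) (hj : t = 0 ∨ j = 0 ∨ (2 ≤ j ∧ j ≤ n)) :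
    (fun z : ℝ => t * z ^ j) ∈ excFunModule n := by
  rcases hj with h | h
  · subst h; simp only [zero_mul]; exact Submodule.zero_mem _
  · exact monomial_mem n t j h

lemma poly_eq_of_eval_ne_zero {P Q : ℝ[X]} (h : ∀ z : ℝ, z ≠ 0 → P.eval z = Q.eval z) :
    P = Q := by
  have : P - Q = 0 := by
    apply Polynomial.eq_zero_of_infinite_isRoot
    apply Set.Infinite.mono (s := ({0} : Set ℝ)ᶜ)
    · intro z hz
      simp only [Set.mem_compl_iff, Set.mem_singleton_iff] at hz
      simp [Polynomial.IsRoot, h z hz]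
    · exact (Set.finite_singleton 0).infinite_compl
  exact sub_eq_zero.mp this

lemma mem_excFunModule_iff (n : ℕ) (f : ℝ → ℝ) (hf : f ∈ excFunModule n) :
    ∃ q : ℝ[X], q.natDegree ≤ n ∧ q.coeff 1 = 0 ∧ ∀ z : ℝ, f z = q.eval z := by
  induction hf using Submodule.span_induction with
  | mem g hg =>
    rcases hg with rfl | ⟨k, hk1, hk2, rfl⟩
    · exact ⟨1, by simp, by rw [Polynomial.coeff_one]; norm_num, by simp⟩
    · refine ⟨X ^ k, by simp [Polynomial.natDegree_X_pow, hk2], ?_, by simp⟩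
      simp [Polynomial.coeff_X_pow]
      omega
  | zero => exact ⟨0, by simp, by simp, by simp⟩
  | add g h _ _ ihg ihh =>
    obtain ⟨q1, h1, h2, h3⟩ := ihg
    obtain ⟨q2, h4, h5, h6⟩ := ihh
    refine ⟨q1 + q2, ?_, by simp [h2, h5], fun z => by simp [h3 z, h6 z]⟩
    exact le_trans (Polynomial.natDegree_add_le _ _) (by omega)
  | smul r g _ ihg =>
    obtain ⟨q, h1, h2, h3⟩ := ihg
    refine ⟨Polynomial.C r * q, le_trans (Polynomial.natDegree_C_mul_le _ _) h1,
      by simp [h2], fun z => by simp [h3 z, mul_comm]⟩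


noncomputable def lcf (p : ℝ[X]) (d : ℕ) (j : ℤ) : ℝ :=
  if 0 ≤ j + d then p.coeff (j + d).toNat else 0

lemma master (pa pb pc q : ℝ[X]) (ka kb kc k : ℕ)
    (E : C ((k:ℝ)*((k:ℝ)-1)) * pa * X^(k + kb + kc) + C (k:ℝ) * pb * X^(k+1+ka+kc)
          + pc * X^(k+2+ka+kb) = q * X^(ka+kb+kc+2)) (m : ℤ) :
    (k:ℝ)*((k:ℝ)-1) * lcf pa ka (m - k + 2) + (k:ℝ) * lcf pb kb (m - k + 1)
      + lcf pc kc (m - k) = lcf q 0 m := by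
  by_cases hN : 0 ≤ m + (ka + kb + kc + 2)
  · set N : ℕ := (m + (ka + kb + kc + 2)).toNat with hNdef
    have hN' : (N : ℤ) = m + (ka + kb + kc + 2) := Int.toNat_of_nonneg hN
    have hE := congrArg (fun p => Polynomial.coeff p N) E
    simp only [Polynomial.coeff_add, Polynomial.coeff_C_mul, Polynomial.coeff_mul_X_pow'] at hE
    unfold lcf
    have e1 : (if (0:ℤ) ≤ m - k + 2 + ka then pa.coeff (m - ↑k + 2 + ↑ka).toNat else 0)
        = (if k + kb + kc ≤ N then pa.coeff (N - (k + kb + kc)) else 0) := by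
      split_ifs with h1 h2 h2
      · congr 1; omega
      · exfalso; omega
      · exfalso; omega
      · rfl
    have e2 : (if (0:ℤ) ≤ m - k + 1 + kb then pb.coeff (m - ↑k + 1 + ↑kb).toNat else 0)
        = (if k + 1 + ka + kc ≤ N then pb.coeff (N - (k + 1 + ka + kc)) else 0) := by
      split_ifs with h1 h2 h2
      · congr 1; omega
      · exfalso; omega
      · exfalso; omega
      · rfl
    have e3 : (if (0:ℤ) ≤ m - k + kc then pc.coeff (m - ↑k + ↑kc).toNat else 0)
        = (if k + 2 + ka + kb ≤ N then pc.coeff (N - (k + 2 + ka + kb)) else 0) := by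
      split_ifs with h1 h2 h2
      · congr 1; omega
      · exfalso; omega
      · exfalso; omega
      · rfl
    have e4 : (if (0:ℤ) ≤ m + ((0:ℕ):ℤ) then q.coeff (m + ((0:ℕ):ℤ)).toNat else 0)
        = (if ka + kb + kc + 2 ≤ N then q.coeff (N - (ka + kb + kc + 2)) else 0) := by
      split_ifs with h1 h2 h2
      · congr 1; omega
      · exfalso; omega
      · exfalso; omega
      · rfl
    rw [e1, e2, e3, e4]
    simp only [mul_ite, mul_zero]
    exact hE
  · unfold lcf
    rw [if_neg (by omega), if_neg (by omega), if_neg (by omega), if_neg (by omega)]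
    ring


lemma get_poly_id (n : ℕ) (a b c : ℝ → ℝ) (pa pb pc : ℝ[X]) (ka kb kc : ℕ)
    (hA : ∀ z : ℝ, z ≠ 0 → a z = pa.eval z / z ^ ka)
    (hB : ∀ z : ℝ, z ≠ 0 → b z = pb.eval z / z ^ kb)
    (hC : ∀ z : ℝ, z ≠ 0 → c z = pc.eval z / z ^ kc)
    (H : ∀ f ∈ excFunModule n, ∃ g ∈ excFunModule n, ∀ z : ℝ, z ≠ 0 →
        a z * deriv (deriv f) z + b z * deriv f z + c z * f z = g z)
    (k : ℕ) (hk : k = 0 ∨ (2 ≤ k ∧ k ≤ n)) :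
    ∃ q : ℝ[X], q.natDegree ≤ n ∧ q.coeff 1 = 0 ∧
      C ((k:ℝ)*((k:ℝ)-1)) * pa * X^(k + kb + kc) + C (k:ℝ) * pb * X^(k+1+ka+kc)
        + pc * X^(k+2+ka+kb) = q * X^(ka+kb+kc+2) := by
  have hf : (fun z : ℝ => z ^ k) ∈ excFunModule n := by
    have := monomial_mem n 1 k hk
    simpa using this
  obtain ⟨g, hg, hgz⟩ := H _ hf
  obtain ⟨q, hq1, hq2, hq3⟩ := mem_excFunModule_iff n g hg
  refine ⟨q, hq1, hq2, ?_⟩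
  apply poly_eq_of_eval_ne_zero
  intro z hz
  have hTa : pa.eval z = a z * z ^ ka := by
    rw [hA z hz]; field_simp
  have hTb : pb.eval z = b z * z ^ kb := by
    rw [hB z hz]; field_simp
  have hTc : pc.eval z = c z * z ^ kc := by
    rw [hC z hz]; field_simp
  have hT := hgz z hz
  rw [hq3 z] at hT
  simp only [eval_add, eval_mul, eval_pow, eval_C, eval_X, hTa, hTb, hTc]
  rcases hk with rfl | ⟨hk2, _⟩
  · -- k = 0
    have hd : deriv (fun z : ℝ => z ^ 0) = fun _ => (0:ℝ) := by
      funext w; simp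
    rw [hd] at hT
    simp only [deriv_const', pow_zero, mul_one, mul_zero, zero_mul, add_zero, zero_add] at hT
    push_cast
    rw [← hT]
    ring
  · obtain ⟨j, rfl⟩ : ∃ j, k = j + 2 := ⟨k - 2, by omega⟩
    have hd1 : deriv (fun z : ℝ => z ^ (j+2)) = fun z : ℝ => ((j:ℝ)+2) * z ^ (j+1) := by
      funext w
      rw [deriv_pow_field]
      push_cast
      ring_nf
    have hd2 : deriv (fun z : ℝ => ((j:ℝ)+2) * z ^ (j+1)) =
        fun z : ℝ => ((j:ℝ)+2) * (((j:ℝ)+1) * z ^ j) := by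
      funext w
      rw [deriv_const_mul _ (differentiable_pow (j+1)).differentiableAt, deriv_pow_field]
      push_cast
      ring_nf
    rw [hd1, hd2] at hT
    push_cast
    rw [← hT]
    ring



lemma deriv_polyeval (q : ℝ[X]) :
    deriv (fun z : ℝ => q.eval z) = fun z : ℝ => q.derivative.eval z :=
  funext fun z => Polynomial.deriv q

theorem backward
    (n : ℕ) (hn : 4 ≤ n) (a b c : ℝ → ℝ)
    (l₁ l₂ l₃ l₄ l₅ l₆ l₇ : ℝ)
    (hl : ∀ z : ℝ, z ≠ 0 →
        a z = l₁ * z ^ 4 + l₂ * z ^ 3 + l₃ * z ^ 2 + l₄ * z + l₅ ∧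
        b z = l₁ * (2 * (1 - (n : ℝ))) * z ^ 3 + l₂ * (-((n : ℝ) - 1)) * z ^ 2
                + l₆ * z - l₄ - l₅ * 2 / z ∧
        c z = l₁ * ((n : ℝ) * ((n : ℝ) - 1)) * z ^ 2 + l₇) :
    ∀ f ∈ excFunModule n, ∃ g ∈ excFunModule n, ∀ z : ℝ, z ≠ 0 →
        a z * deriv (deriv f) z + b z * deriv f z + c z * f z = g z := by
  intro f hf
  have key : ∃ q : ℝ[X], (f = fun z : ℝ => q.eval z) ∧ ∃ g ∈ excFunModule n,
      ∀ z : ℝ, z ≠ 0 →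
        a z * (q.derivative.derivative.eval z) + b z * (q.derivative.eval z)
          + c z * q.eval z = g z := by
    induction hf using Submodule.span_induction with
    | mem f0 hf0 =>
      rcases hf0 with rfl | ⟨k, hk2, hkn, rfl⟩
      · -- constant function 1
        refine ⟨1, by funext z; simp, ?_⟩
        refine ⟨(fun z : ℝ => (l₁ * ((n:ℝ) * ((n:ℝ)-1))) * z ^ 2) + (fun z : ℝ => l₇ * z ^ 0),
          Submodule.add_mem _ (monomial_mem n _ 2 (Or.inr ⟨le_refl 2, by omega⟩))
            (monomial_mem n l₇ 0 (Or.inl rfl)), ?_⟩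
        intro z hz
        have h3 := (hl z hz).2.2
        simp only [Polynomial.derivative_one, Polynomial.derivative_zero, Polynomial.eval_zero,
          Polynomial.eval_one, Pi.add_apply]
        rw [h3]
        ring
      · -- monomial z^k, 2 ≤ k ≤ n
        obtain ⟨j, rfl⟩ : ∃ j, k = j + 2 := ⟨k - 2, by omega⟩
        refine ⟨X ^ (j+2), by funext z; simp, ?_⟩
        refine ⟨(fun z : ℝ => (l₁ * (((n:ℝ) - ((j:ℝ)+2)) * ((n:ℝ) - ((j:ℝ)+2) - 1))) * z ^ (j+4))
          + (fun z : ℝ => (l₂ * ((((j:ℝ)+2)) * (((j:ℝ)+2) - (n:ℝ)))) * z ^ (j+3))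
          + (fun z : ℝ => ((l₃ * (((j:ℝ)+2) * ((j:ℝ)+1)) + l₆ * ((j:ℝ)+2) + l₇)) * z ^ (j+2))
          + (fun z : ℝ => (l₄ * (((j:ℝ)+2) * ((j:ℝ)))) * z ^ (j+1))
          + (fun z : ℝ => (l₅ * (((j:ℝ)+2) * ((j:ℝ)-1))) * z ^ j), ?_, ?_⟩
        · refine Submodule.add_mem _ (Submodule.add_mem _ (Submodule.add_mem _
            (Submodule.add_mem _ ?_ ?_) ?_) ?_) ?_
          · -- z^(j+4)
            apply zero_or_monomial_mem
            by_cases h : j + 4 ≤ n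
            · exact Or.inr (Or.inr ⟨by omega, h⟩)
            · left
              have h2 : n = j + 2 ∨ n = j + 3 := by omega
              rcases h2 with h2 | h2
              · have : (n:ℝ) = (j:ℝ) + 2 := by rw [h2]; push_cast; ring
                rw [this]; ring
              · have : (n:ℝ) = (j:ℝ) + 3 := by rw [h2]; push_cast; ring
                rw [this]; ring
          · -- z^(j+3)
            apply zero_or_monomial_mem
            by_cases h : j + 3 ≤ n
            · exact Or.inr (Or.inr ⟨by omega, h⟩)
            · left
              have h2 : (n:ℝ) = (j:ℝ) + 2 := by
                have : n = j + 2 := by omega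
                rw [this]; push_cast; ring
              rw [h2]; ring
          · exact zero_or_monomial_mem n _ _ (Or.inr (Or.inr ⟨by omega, by omega⟩))
          · -- z^(j+1)
            apply zero_or_monomial_mem
            rcases Nat.eq_zero_or_pos j with rfl | hj
            · left; push_cast; ring
            · exact Or.inr (Or.inr ⟨by omega, by omega⟩)
          · -- z^j
            apply zero_or_monomial_mem
            match j, hkn with
            | 0, _ => exact Or.inr (Or.inl rfl)
            | 1, _ => left; push_cast; ring
            | (m+2), h => exact Or.inr (Or.inr ⟨by omega, by omega⟩)
        · intro z hz
          obtain ⟨h1, h2, h3⟩ := hl z hz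
          rw [Polynomial.derivative_X_pow, Polynomial.derivative_C_mul,
            Polynomial.derivative_X_pow]
          simp only [Polynomial.eval_mul, Polynomial.eval_C, Polynomial.eval_pow,
            Polynomial.eval_X, Pi.add_apply]
          rw [h1, h2, h3]
          have e1 : j + 2 - 1 = j + 1 := by omega
          have e2 : j + 1 - 1 = j := by omega
          rw [e1, e2]
          push_cast
          field_simp
          ring
    | zero =>
      exact ⟨0, by funext z; simp, 0, Submodule.zero_mem _, fun z hz => by simp⟩
    | add f1 f2 _ _ ih1 ih2 =>
      obtain ⟨q1, rfl, g1, hg1, hid1⟩ := ih1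
      obtain ⟨q2, rfl, g2, hg2, hid2⟩ := ih2
      refine ⟨q1 + q2, by funext z; simp, g1 + g2, Submodule.add_mem _ hg1 hg2, ?_⟩
      intro z hz
      simp only [Polynomial.derivative_add, Polynomial.eval_add, Pi.add_apply]
      linear_combination hid1 z hz + hid2 z hz
    | smul r f1 _ ih =>
      obtain ⟨q1, rfl, g1, hg1, hid1⟩ := ih
      refine ⟨r • q1, by funext z; simp, r • g1, Submodule.smul_mem _ r hg1, ?_⟩
      intro z hz
      simp only [Polynomial.derivative_smul, Polynomial.eval_smul, Pi.smul_apply,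
        smul_eq_mul]
      linear_combination r * hid1 z hz
  obtain ⟨q, rfl, g, hg, hid⟩ := key
  refine ⟨g, hg, fun z hz => ?_⟩
  rw [deriv_polyeval q, deriv_polyeval q.derivative]
  exact hid z hz



lemma lcf_zero {n : ℕ} (q : ℝ[X]) (hd : q.natDegree ≤ n) (h1 : q.coeff 1 = 0)
    (m : ℤ) (hm : m < 0 ∨ m = 1 ∨ (n:ℤ) < m) : lcf q 0 m = 0 := by
  unfold lcf
  rcases hm with hm | hm | hm
  · rw [if_neg (by omega)]
  · subst hm
    rw [if_pos (by omega)]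
    rw [show ((1:ℤ) + ((0:ℕ):ℤ)).toNat = 1 by omega]
    exact h1
  · rw [if_pos (by omega)]
    apply Polynomial.coeff_eq_zero_of_natDegree_lt
    omega

lemma lcf_coeff (p : ℝ[X]) (d : ℕ) (N : ℕ) : p.coeff N = lcf p d ((N:ℤ) - d) := by
  unfold lcf
  rw [if_pos (by omega)]
  congr 1
  omega

theorem forward (n : ℕ) (hn : 4 ≤ n) (a b c : ℝ → ℝ)
    (ha : IsLaurentPoly a) (hb : IsLaurentPoly b) (hc : IsLaurentPoly c)
    (H : ∀ f ∈ excFunModule n, ∃ g ∈ excFunModule n, ∀ z : ℝ, z ≠ 0 →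
        a z * deriv (deriv f) z + b z * deriv f z + c z * f z = g z) :
    ∃ l₁ l₂ l₃ l₄ l₅ l₆ l₇ : ℝ, ∀ z : ℝ, z ≠ 0 →
        a z = l₁ * z ^ 4 + l₂ * z ^ 3 + l₃ * z ^ 2 + l₄ * z + l₅ ∧
        b z = l₁ * (2 * (1 - (n : ℝ))) * z ^ 3 + l₂ * (-((n : ℝ) - 1)) * z ^ 2
                + l₆ * z - l₄ - l₅ * 2 / z ∧
        c z = l₁ * ((n : ℝ) * ((n : ℝ) - 1)) * z ^ 2 + l₇ := by
  obtain ⟨pa, ka, hA⟩ := ha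
  obtain ⟨pb, kb, hB⟩ := hb
  obtain ⟨pc, kc, hC⟩ := hc
  obtain ⟨q0, hq0d, hq0c, hE0⟩ := get_poly_id n a b c pa pb pc ka kb kc hA hB hC H 0 (Or.inl rfl)
  obtain ⟨q2, hq2d, hq2c, hE2⟩ := get_poly_id n a b c pa pb pc ka kb kc hA hB hC H 2
    (Or.inr ⟨le_refl 2, by omega⟩)
  obtain ⟨q3, hq3d, hq3c, hE3⟩ := get_poly_id n a b c pa pb pc ka kb kc hA hB hC H 3
    (Or.inr ⟨by omega, by omega⟩)
  obtain ⟨q4, hq4d, hq4c, hE4⟩ := get_poly_id n a b c pa pb pc ka kb kc hA hB hC H 4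
    (Or.inr ⟨by omega, by omega⟩)
  obtain ⟨qn, hqnd, hqnc, hEn⟩ := get_poly_id n a b c pa pb pc ka kb kc hA hB hC H n
    (Or.inr ⟨by omega, le_refl n⟩)
  obtain ⟨qm, hqmd, hqmc, hEm⟩ := get_poly_id n a b c pa pb pc ka kb kc hA hB hC H (n-1)
    (Or.inr ⟨by omega, by omega⟩)
  obtain ⟨qp, hqpd, hqpc, hEp⟩ := get_poly_id n a b c pa pb pc ka kb kc hA hB hC H (n-2)
    (Or.inr ⟨by omega, by omega⟩)
  have M0 := master pa pb pc q0 ka kb kc 0 hE0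
  have M2 := master pa pb pc q2 ka kb kc 2 hE2
  have M3 := master pa pb pc q3 ka kb kc 3 hE3
  have M4 := master pa pb pc q4 ka kb kc 4 hE4
  have Mn := master pa pb pc qn ka kb kc n hEn
  have Mm := master pa pb pc qm ka kb kc (n-1) hEm
  have Mp := master pa pb pc qp ka kb kc (n-2) hEp
  -- normalized equations
  have hC0 : ∀ m : ℤ, lcf pc kc m = lcf q0 0 m := by
    intro m
    have h := M0 m
    push_cast at h
    rw [show m - 0 = m by ring] at h
    linear_combination h
  have N2 : ∀ m : ℤ, 2 * lcf pa ka m + 2 * lcf pb kb (m-1) + lcf pc kc (m-2) = lcf q2 0 m := by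
    intro m
    have h := M2 m
    push_cast at h
    rw [show m - 2 + 2 = m by ring, show m - 2 + 1 = m - 1 by ring] at h
    linear_combination h
  have N3 : ∀ m : ℤ, 6 * lcf pa ka (m-1) + 3 * lcf pb kb (m-2) + lcf pc kc (m-3) = lcf q3 0 m := by
    intro m
    have h := M3 m
    push_cast at h
    rw [show m - 3 + 2 = m - 1 by ring, show m - 3 + 1 = m - 2 by ring] at h
    linear_combination h
  have N4 : ∀ m : ℤ, 12 * lcf pa ka (m-2) + 4 * lcf pb kb (m-3) + lcf pc kc (m-4) = lcf q4 0 m := by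
    intro m
    have h := M4 m
    push_cast at h
    rw [show m - 4 + 2 = m - 2 by ring, show m - 4 + 1 = m - 3 by ring] at h
    linear_combination h
  have Nn : ∀ m : ℤ, (n:ℝ)*((n:ℝ)-1) * lcf pa ka (m - n + 2) + (n:ℝ) * lcf pb kb (m - n + 1)
      + lcf pc kc (m - n) = lcf qn 0 m := Mn
  have Nm : ∀ m : ℤ, ((n:ℝ)-1)*((n:ℝ)-2) * lcf pa ka (m - n + 3) + ((n:ℝ)-1) * lcf pb kb (m - n + 2)
      + lcf pc kc (m - n + 1) = lcf qm 0 m := by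
    intro m
    have h := Mm m
    have c2 : ((n-1 : ℕ) : ℤ) = (n:ℤ) - 1 := by omega
    have c1 : ((n-1 : ℕ) : ℝ) = (n:ℝ) - 1 := by
      rw [Nat.cast_sub (by omega : 1 ≤ n)]; norm_num
    rw [c2] at h
    rw [show m - ((n:ℤ) - 1) + 2 = m - n + 3 by ring, show m - ((n:ℤ) - 1) + 1 = m - n + 2 by ring,
      show m - ((n:ℤ) - 1) = m - n + 1 by ring] at h
    rw [c1] at h
    linear_combination h
  have Np : ∀ m : ℤ, ((n:ℝ)-2)*((n:ℝ)-3) * lcf pa ka (m - n + 4) + ((n:ℝ)-2) * lcf pb kb (m - n + 3)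
      + lcf pc kc (m - n + 2) = lcf qp 0 m := by
    intro m
    have h := Mp m
    have c2 : ((n-2 : ℕ) : ℤ) = (n:ℤ) - 2 := by omega
    have c1 : ((n-2 : ℕ) : ℝ) = (n:ℝ) - 2 := by
      rw [Nat.cast_sub (by omega : 2 ≤ n)]; norm_num
    rw [c2] at h
    rw [show m - ((n:ℤ) - 2) + 2 = m - n + 4 by ring, show m - ((n:ℤ) - 2) + 1 = m - n + 3 by ring,
      show m - ((n:ℤ) - 2) = m - n + 2 by ring] at h
    rw [c1] at h
    linear_combination h
  clear M0 M2 M3 M4 Mn Mm Mp hE0 hE2 hE3 hE4 hEn hEm hEp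
  -- high-degree vanishing
  have FA : ∀ t : ℤ, 5 ≤ t → lcf pa ka t = 0 := by
    intro t ht
    have h1 := Nn ((n:ℤ) + t - 2)
    rw [lcf_zero qn hqnd hqnc _ (by omega)] at h1
    rw [show (n:ℤ) + t - 2 - n + 2 = t by ring, show (n:ℤ) + t - 2 - n + 1 = t - 1 by ring,
      show (n:ℤ) + t - 2 - n = t - 2 by ring] at h1
    have h2 := Nm ((n:ℤ) + t - 3)
    rw [lcf_zero qm hqmd hqmc _ (by omega)] at h2
    rw [show (n:ℤ) + t - 3 - n + 3 = t by ring, show (n:ℤ) + t - 3 - n + 2 = t - 1 by ring,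
      show (n:ℤ) + t - 3 - n + 1 = t - 2 by ring] at h2
    have h3 := Np ((n:ℤ) + t - 4)
    rw [lcf_zero qp hqpd hqpc _ (by omega)] at h3
    rw [show (n:ℤ) + t - 4 - n + 4 = t by ring, show (n:ℤ) + t - 4 - n + 3 = t - 1 by ring,
      show (n:ℤ) + t - 4 - n + 2 = t - 2 by ring] at h3
    linear_combination (h1 - 2*h2 + h3)/2
  have FB : ∀ t : ℤ, 5 ≤ t → lcf pb kb (t-1) = 0 := by
    intro t ht
    have h1 := Nn ((n:ℤ) + t - 2)
    rw [lcf_zero qn hqnd hqnc _ (by omega)] at h1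
    rw [show (n:ℤ) + t - 2 - n + 2 = t by ring, show (n:ℤ) + t - 2 - n + 1 = t - 1 by ring,
      show (n:ℤ) + t - 2 - n = t - 2 by ring] at h1
    have h2 := Nm ((n:ℤ) + t - 3)
    rw [lcf_zero qm hqmd hqmc _ (by omega)] at h2
    rw [show (n:ℤ) + t - 3 - n + 3 = t by ring, show (n:ℤ) + t - 3 - n + 2 = t - 1 by ring,
      show (n:ℤ) + t - 3 - n + 1 = t - 2 by ring] at h2
    linear_combination h1 - h2 - (2*(n:ℝ) - 2) * FA t ht
  have FC : ∀ t : ℤ, 5 ≤ t → lcf pc kc (t-2) = 0 := by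
    intro t ht
    have h1 := Nn ((n:ℤ) + t - 2)
    rw [lcf_zero qn hqnd hqnc _ (by omega)] at h1
    rw [show (n:ℤ) + t - 2 - n + 2 = t by ring, show (n:ℤ) + t - 2 - n + 1 = t - 1 by ring,
      show (n:ℤ) + t - 2 - n = t - 2 by ring] at h1
    linear_combination h1 - (n:ℝ)*((n:ℝ)-1) * FA t ht - (n:ℝ) * FB t ht
  have hCside : ∀ m : ℤ, m < 0 ∨ m = 1 → lcf pc kc m = 0 := by
    intro m hm
    rw [hC0 m]
    apply lcf_zero q0 hq0d hq0c
    tauto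
  -- t = 4 relations
  have hB3 : lcf pb kb 3 = 2*(1 - (n:ℝ)) * lcf pa ka 4 := by
    have h1 := Nn ((n:ℤ) + 2)
    rw [lcf_zero qn hqnd hqnc _ (by omega)] at h1
    rw [show (n:ℤ) + 2 - n + 2 = 4 by ring, show (n:ℤ) + 2 - n + 1 = 3 by ring,
      show (n:ℤ) + 2 - n = 2 by ring] at h1
    have h2 := Nm ((n:ℤ) + 1)
    rw [lcf_zero qm hqmd hqmc _ (by omega)] at h2
    rw [show (n:ℤ) + 1 - n + 3 = 4 by ring, show (n:ℤ) + 1 - n + 2 = 3 by ring,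
      show (n:ℤ) + 1 - n + 1 = 2 by ring] at h2
    linear_combination h1 - h2
  have hC2 : lcf pc kc 2 = (n:ℝ)*((n:ℝ)-1) * lcf pa ka 4 := by
    have h1 := Nn ((n:ℤ) + 2)
    rw [lcf_zero qn hqnd hqnc _ (by omega)] at h1
    rw [show (n:ℤ) + 2 - n + 2 = 4 by ring, show (n:ℤ) + 2 - n + 1 = 3 by ring,
      show (n:ℤ) + 2 - n = 2 by ring] at h1
    linear_combination h1 - (n:ℝ) * hB3
  -- t = 3 relation
  have hB2 : lcf pb kb 2 = -((n:ℝ)-1) * lcf pa ka 3 := by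
    have h1 := Nn ((n:ℤ) + 1)
    rw [lcf_zero qn hqnd hqnc _ (by omega)] at h1
    rw [show (n:ℤ) + 1 - n + 2 = 3 by ring, show (n:ℤ) + 1 - n + 1 = 2 by ring,
      show (n:ℤ) + 1 - n = 1 by ring] at h1
    have hc1 := hCside 1 (Or.inr rfl)
    have hn0 : (n:ℝ) ≠ 0 := Nat.cast_ne_zero.mpr (by omega)
    have hmul : (n:ℝ) * (lcf pb kb 2 + ((n:ℝ)-1) * lcf pa ka 3) = 0 := by
      linear_combination h1 - hc1
    have := (mul_eq_zero.mp hmul).resolve_left hn0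
    linarith
  -- negative side
  have hAB : ∀ s : ℤ, s ≤ -1 → lcf pa ka s + lcf pb kb (s-1) = 0 := by
    intro s hs
    have h := N2 s
    rw [lcf_zero q2 hq2d hq2c s (Or.inl (by omega))] at h
    have hc := hCside (s-2) (Or.inl (by omega))
    linarith
  have hAneg : ∀ s : ℤ, s ≤ -2 → lcf pa ka s = 0 := by
    intro s hs
    have h := N3 (s+1)
    rw [lcf_zero q3 hq3d hq3c _ (Or.inl (by omega))] at h
    rw [show s+1-1 = s by ring, show s+1-2 = s-1 by ring, show s+1-3 = s-2 by ring] at h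
    have hc := hCside (s-2) (Or.inl (by omega))
    have hab := hAB s (by omega)
    linarith
  have hBneg : ∀ j : ℤ, j ≤ -3 → lcf pb kb j = 0 := by
    intro j hj
    have hab := hAB (j+1) (by omega)
    rw [show j+1-1 = j by ring] at hab
    have := hAneg (j+1) (by omega)
    linarith
  have hB0' : lcf pb kb 0 = - lcf pa ka 1 := by
    have h := N2 1
    rw [lcf_zero q2 hq2d hq2c 1 (Or.inr (Or.inl rfl))] at h
    rw [show (1:ℤ)-1 = 0 by ring, show (1:ℤ)-2 = -1 by ring] at h
    have hc := hCside (-1) (Or.inl (by omega))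
    linarith
  have hBm1 : lcf pb kb (-1) = -(2 * lcf pa ka 0) := by
    have h := N3 1
    rw [lcf_zero q3 hq3d hq3c 1 (Or.inr (Or.inl rfl))] at h
    rw [show (1:ℤ)-1 = 0 by ring, show (1:ℤ)-2 = -1 by ring, show (1:ℤ)-3 = -2 by ring] at h
    have hc := hCside (-2) (Or.inl (by omega))
    linarith
  have hAm1 : lcf pa ka (-1) = 0 ∧ lcf pb kb (-2) = 0 := by
    have h := N4 1
    rw [lcf_zero q4 hq4d hq4c 1 (Or.inr (Or.inl rfl))] at h
    rw [show (1:ℤ)-2 = -1 by ring, show (1:ℤ)-3 = -2 by ring, show (1:ℤ)-4 = -3 by ring] at h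
    have hc := hCside (-3) (Or.inl (by omega))
    have hab := hAB (-1) (by omega)
    rw [show (-1:ℤ)-1 = -2 by ring] at hab
    constructor <;> linarith
  -- consolidated vanishing
  have hAzero : ∀ j : ℤ, j < 0 ∨ 4 < j → lcf pa ka j = 0 := by
    intro j hj
    rcases hj with hj | hj
    · by_cases h : j = -1
      · rw [h]; exact hAm1.1
      · exact hAneg j (by omega)
    · exact FA j (by omega)
  have hBzero : ∀ j : ℤ, j < -1 ∨ 3 < j → lcf pb kb j = 0 := by
    intro j hj
    rcases hj with hj | hj
    · by_cases h : j = -2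
      · rw [h]; exact hAm1.2
      · exact hBneg j (by omega)
    · have := FB (j+1) (by omega)
      rw [show j+1-1 = j by ring] at this
      exact this
  have hCzero : ∀ j : ℤ, j < 0 ∨ j = 1 ∨ 2 < j → lcf pc kc j = 0 := by
    intro j hj
    rcases hj with hj | hj | hj
    · exact hCside j (Or.inl hj)
    · exact hCside j (Or.inr hj)
    · have := FC (j+2) (by omega)
      rw [show j+2-2 = j by ring] at this
      exact this
  -- polynomial reconstruction
  have hpa : pa = (C (lcf pa ka 4) * X^4 + C (lcf pa ka 3) * X^3 + C (lcf pa ka 2) * X^2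
      + C (lcf pa ka 1) * X + C (lcf pa ka 0)) * X^ka := by
    ext N
    rw [Polynomial.coeff_mul_X_pow']
    simp only [coeff_add, coeff_C_mul, coeff_X_pow, coeff_C, coeff_X, mul_ite, mul_one, mul_zero]
    rw [lcf_coeff pa ka N]
    split_ifs <;>
      first
        | (exfalso; omega)
        | (rw [show ((N:ℤ) - ka) = 4 by omega]; try norm_num)
        | (rw [show ((N:ℤ) - ka) = 3 by omega]; try norm_num)
        | (rw [show ((N:ℤ) - ka) = 2 by omega]; try norm_num)
        | (rw [show ((N:ℤ) - ka) = 1 by omega]; try norm_num)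
        | (rw [show ((N:ℤ) - ka) = 0 by omega]; try norm_num)
        | (rw [hAzero ((N:ℤ) - ka) (by omega)]; try norm_num)
  have hpb : pb * X^1 = (C (lcf pb kb 3) * X^4 + C (lcf pb kb 2) * X^3 + C (lcf pb kb 1) * X^2
      + C (lcf pb kb 0) * X + C (lcf pb kb (-1))) * X^kb := by
    ext N
    rw [Polynomial.coeff_mul_X_pow', Polynomial.coeff_mul_X_pow']
    simp only [coeff_add, coeff_C_mul, coeff_X_pow, coeff_C, coeff_X, mul_ite, mul_one, mul_zero]
    split_ifs <;>
      first
        | (exfalso; omega)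
        | (rw [lcf_coeff pb kb (N-1), show (((N-1:ℕ)):ℤ) - kb = 4 by omega]; try norm_num)
        | (rw [lcf_coeff pb kb (N-1), show (((N-1:ℕ)):ℤ) - kb = 3 by omega]; try norm_num)
        | (rw [lcf_coeff pb kb (N-1), show (((N-1:ℕ)):ℤ) - kb = 2 by omega]; try norm_num)
        | (rw [lcf_coeff pb kb (N-1), show (((N-1:ℕ)):ℤ) - kb = 1 by omega]; try norm_num)
        | (rw [lcf_coeff pb kb (N-1), show (((N-1:ℕ)):ℤ) - kb = 0 by omega]; try norm_num)
        | (rw [lcf_coeff pb kb (N-1), show (((N-1:ℕ)):ℤ) - kb = -1 by omega]; try norm_num)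
        | (rw [lcf_coeff pb kb (N-1), hBzero ((((N-1:ℕ)):ℤ) - kb) (by omega)]; try norm_num)
        | (symm; rw [show lcf pb kb (-1) = 0 by unfold lcf; rw [if_neg (by omega)]]; try norm_num)
        | norm_num
  have hpc : pc = (C (lcf pc kc 2) * X^2 + C (lcf pc kc 0)) * X^kc := by
    ext N
    rw [Polynomial.coeff_mul_X_pow']
    simp only [coeff_add, coeff_C_mul, coeff_X_pow, coeff_C, mul_ite, mul_one, mul_zero]
    rw [lcf_coeff pc kc N]
    split_ifs <;>
      first
        | (exfalso; omega)
        | (rw [show ((N:ℤ) - kc) = 2 by omega]; try norm_num)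
        | (rw [show ((N:ℤ) - kc) = 0 by omega]; try norm_num)
        | (rw [hCzero ((N:ℤ) - kc) (by omega)]; try norm_num)
  -- conclusion
  refine ⟨lcf pa ka 4, lcf pa ka 3, lcf pa ka 2, lcf pa ka 1, lcf pa ka 0,
    lcf pb kb 1, lcf pc kc 0, ?_⟩
  intro z hz
  refine ⟨?_, ?_, ?_⟩
  · have hev := congrArg (Polynomial.eval z) hpa
    simp only [eval_mul, eval_add, eval_C, eval_pow, eval_X] at hev
    rw [hA z hz, div_eq_iff (pow_ne_zero ka hz)]
    linear_combination hev
  · have hev := congrArg (Polynomial.eval z) hpb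
    simp only [eval_mul, eval_add, eval_C, eval_pow, eval_X] at hev
    have hTb : pb.eval z = b z * z ^ kb := by rw [hB z hz]; field_simp
    have hkey : b z * z = lcf pb kb 3 * z^4 + lcf pb kb 2 * z^3 + lcf pb kb 1 * z^2
        + lcf pb kb 0 * z + lcf pb kb (-1) := by
      apply mul_right_cancel₀ (pow_ne_zero kb hz)
      linear_combination hev - z * hTb
    rw [hB3, hB2, hB0', hBm1] at hkey
    field_simp
    linear_combination hkey
  · have hev := congrArg (Polynomial.eval z) hpc
    simp only [eval_mul, eval_add, eval_C, eval_pow, eval_X] at hev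
    rw [hC2] at hev
    rw [hC z hz]
    rw [div_eq_iff (pow_ne_zero kc hz)]
    linear_combination hev


/-- a second order operator T = a∂² + b∂ + c with Laurent-polynomial
coefficients preserves 𝒫⁽¹⁾ₙ (n ≥ 4) if and only if it is a real linear combination of
the seven operators
z⁴∂² + 2(1-n)z³∂ + n(n-1)z², z³∂² - (n-1)z²∂, z²∂², z∂² - ∂, ∂² - 2z⁻¹∂, z∂, 1. -/
theorem exceptional_module_classification
    (n : ℕ) (hn : 4 ≤ n) (a b c : ℝ → ℝ)
    (ha : IsLaurentPoly a) (hb : IsLaurentPoly b) (hc : IsLaurentPoly c) :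
    (∀ f ∈ excFunModule n, ∃ g ∈ excFunModule n, ∀ z : ℝ, z ≠ 0 →
        a z * deriv (deriv f) z + b z * deriv f z + c z * f z = g z)
    ↔ ∃ l₁ l₂ l₃ l₄ l₅ l₆ l₇ : ℝ, ∀ z : ℝ, z ≠ 0 →
        a z = l₁ * z ^ 4 + l₂ * z ^ 3 + l₃ * z ^ 2 + l₄ * z + l₅ ∧
        b z = l₁ * (2 * (1 - (n : ℝ))) * z ^ 3 + l₂ * (-((n : ℝ) - 1)) * z ^ 2
                + l₆ * z - l₄ - l₅ * 2 / z ∧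
        c z = l₁ * ((n : ℝ) * ((n : ℝ) - 1)) * z ^ 2 + l₇ := by
  constructor
  · exact fun H => forward n hn a b c ha hb hc H
  · rintro ⟨l₁, l₂, l₃, l₄, l₅, l₆, l₇, hl⟩
    exact backward n hn a b c l₁ l₂ l₃ l₄ l₅ l₆ l₇ hl
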